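/- The function u ↦ ln((1 - e^{-u})/u) is convex on (0, ∞). -/

import Mathlib

open Real Set

lemma aux_ne (u : ℝ) (hu : 0 < u) : 1 - Real.exp (-u) > 0 := by
  simp [Real.exp_lt_one_iff.mpr (by linarith : -u < 0)]

lemma aux_d1 (u : ℝ) (hu : 0 < u) :
    HasDerivAt (fun u => Real.log (1 - Real.exp (-u)) - Real.log u)
      (Real.exp (-u) / (1 - Real.exp (-u)) - 1 / u) u := by
  have h1 : HasDerivAt (fun u : ℝ => 1 - Real.exp (-u)) (Real.exp (-u)) u := by
    have := ((Real.hasDerivAt_exp (-u)).comp u (hasDerivAt_neg u))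
    exact ((hasDerivAt_const u (1:ℝ)).sub this).congr_deriv (by ring)
  have h2 : HasDerivAt (fun u : ℝ => Real.log (1 - Real.exp (-u)))
      (Real.exp (-u) / (1 - Real.exp (-u))) u := by
    have := (Real.hasDerivAt_log (ne_of_gt (aux_ne u hu))).comp u h1
    exact this.congr_deriv (by ring)
  have h3 : HasDerivAt Real.log (1 / u) u := by
    simpa [one_div] using Real.hasDerivAt_log (ne_of_gt hu)
  exact h2.sub h3

lemma aux_d2 (u : ℝ) (hu : 0 < u) :
    HasDerivAt (fun u => Real.exp (-u) / (1 - Real.exp (-u)) - 1 / u)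
      (1 / u ^ 2 - Real.exp (-u) / (1 - Real.exp (-u)) ^ 2) u := by
  have hne := ne_of_gt (aux_ne u hu)
  have h1 : HasDerivAt (fun u : ℝ => 1 - Real.exp (-u)) (Real.exp (-u)) u := by
    have := ((Real.hasDerivAt_exp (-u)).comp u (hasDerivAt_neg u))
    exact ((hasDerivAt_const u (1:ℝ)).sub this).congr_deriv (by ring)
  have he : HasDerivAt (fun u : ℝ => Real.exp (-u)) (-Real.exp (-u)) u := by
    have := ((Real.hasDerivAt_exp (-u)).comp u (hasDerivAt_neg u))
    exact this.congr_deriv (by ring)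
  have h2 : HasDerivAt (fun u : ℝ => Real.exp (-u) / (1 - Real.exp (-u)))
      ((-Real.exp (-u) * (1 - Real.exp (-u)) - Real.exp (-u) * Real.exp (-u)) /
        (1 - Real.exp (-u)) ^ 2) u := he.div h1 hne
  have h3 : HasDerivAt (fun u : ℝ => 1 / u) (-(1 / u ^ 2)) u := by
    simpa using (hasDerivAt_inv (ne_of_gt hu))
  exact (h2.sub h3).congr_deriv (by ring)

lemma aux_nonneg (u : ℝ) (hu : 0 < u) :
    0 ≤ 1 / u ^ 2 - Real.exp (-u) / (1 - Real.exp (-u)) ^ 2 := by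
  have h1 : 0 < 1 - Real.exp (-u) := aux_ne u hu
  have hs : u / 2 < Real.sinh (u / 2) := Real.self_lt_sinh_iff.mpr (by linarith)
  rw [Real.sinh_eq] at hs
  have hexp : 0 < Real.exp (-(u/2)) := Real.exp_pos _
  -- u * exp(-u/2) < 1 - exp(-u)
  have key : u * Real.exp (-(u/2)) < 1 - Real.exp (-u) := by
    have := mul_lt_mul_of_pos_right hs hexp
    have he : Real.exp (u/2) * Real.exp (-(u/2)) = 1 := by
      rw [← Real.exp_add]; simp
    have he2 : Real.exp (-(u/2)) * Real.exp (-(u/2)) = Real.exp (-u) := by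
      rw [← Real.exp_add]; ring_nf
    nlinarith [this]
  have key2 : u ^ 2 * Real.exp (-u) ≤ (1 - Real.exp (-u)) ^ 2 := by
    have hl : 0 ≤ u * Real.exp (-(u/2)) := by positivity
    have he2 : Real.exp (-(u/2)) * Real.exp (-(u/2)) = Real.exp (-u) := by
      rw [← Real.exp_add]; ring_nf
    nlinarith [key, hl]
  rw [sub_nonneg, div_le_div_iff₀ (by positivity) (by positivity)]
  nlinarith [key2, Real.exp_pos (-u), sq_nonneg u]

theorem stmt9 :
    ConvexOn ℝ (Set.Ioi (0 : ℝ)) (fun u => Real.log ((1 - Real.exp (-u)) / u)) := by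
  have hconv : ConvexOn ℝ (Set.Ioi (0 : ℝ))
      (fun u => Real.log (1 - Real.exp (-u)) - Real.log u) := by
    apply convexOn_of_hasDerivWithinAt2_nonneg (convex_Ioi 0)
      (f' := fun u => Real.exp (-u) / (1 - Real.exp (-u)) - 1 / u)
      (f'' := fun u => 1 / u ^ 2 - Real.exp (-u) / (1 - Real.exp (-u)) ^ 2)
    · intro x hx
      exact ((aux_d1 x hx).sub (hasDerivAt_const x 0)).continuousAt.continuousWithinAt |>.congr
        (fun y _ => by simp) (by simp)
    · intro x hx
      rw [interior_Ioi] at hx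
      exact (aux_d1 x hx).hasDerivWithinAt
    · intro x hx
      rw [interior_Ioi] at hx
      exact (aux_d2 x hx).hasDerivWithinAt
    · intro x hx
      rw [interior_Ioi] at hx
      exact aux_nonneg x hx
  refine hconv.congr fun u hu => ?_
  have hu' : (0:ℝ) < u := hu
  rw [Real.log_div (ne_of_gt (aux_ne u hu')) (ne_of_gt hu')]
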